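/- In the situation below (M free of rank d over K⟨φ⟩ with ρ-action matrix D, and J a Janet basis for ⟨p_1,…,p_d⟩), M is finitely generated as K⟨ρ⟩-module (i.e., there are finitely many elements of M whose S-iterates span M over K) if and only if n_i < ∞ for all i = 1, …, d. -/

import Mathlib

/-!
Common setup: the skew polynomial ring `D = K{φ,ρ}` (with commuting endomorphisms
`γφ, γρ : K → K`, `φ·x = γφ(x)·φ`, `ρ·x = γρ(x)·ρ`), the free left `D`-module
`𝓕 = ⊕_{i=1}^d D κ_i`, its monomials `φ^k ρ^j κ_i`, the monomial order, cones,
Janet bases, and the data attached to a `D`-module `M` that is free over `K⟨φ⟩`.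

`𝓕` is realized concretely as finitely supported coefficient functions on the
set of monomial indices `(i, k, j) ↔ φ^k ρ^j κ_i`; multiplication by `φ` resp. `ρ`
is the K-semilinear shift operator `PhiMul` resp. `RhoMul`.
-/

namespace JanetSetup

/-- Index of a monomial `φ^k ρ^j κ_i` of `𝓕`: the triple `(i, k, j)`. -/
abbrev MonIx (d : ℕ) := Fin d × ℕ × ℕ

/-- The free module `𝓕 = ⊕_{i=1}^d D κ_i`, as coefficient functions on monomials. -/
abbrev Fr (K : Type) [Field K] (d : ℕ) : Type := MonIx d →₀ K

variable {K : Type} [Field K] {d : ℕ}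

/-- Left multiplication by the variable `φ` on `𝓕`. -/
noncomputable def PhiMul (γφ : K →+* K) (f : Fr K d) : Fr K d :=
  Finsupp.mapDomain (fun m => (m.1, m.2.1 + 1, m.2.2))
    (Finsupp.mapRange (fun x => γφ x) (map_zero γφ) f)

/-- Left multiplication by the variable `ρ` on `𝓕`. -/
noncomputable def RhoMul (γρ : K →+* K) (f : Fr K d) : Fr K d :=
  Finsupp.mapDomain (fun m => (m.1, m.2.1, m.2.2 + 1))
    (Finsupp.mapRange (fun x => γρ x) (map_zero γρ) f)

/-- The left `D`-submodule of `𝓕` generated by a set `s` (as a `K`-subspace: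
the `K`-span of all `φ^k ρ^j g`, `g ∈ s`). -/
noncomputable def DSpan (γφ γρ : K →+* K) (s : Set (Fr K d)) : Submodule K (Fr K d) :=
  Submodule.span K
    {x | ∃ (k j : ℕ) (g : Fr K d), g ∈ s ∧ x = (PhiMul γφ)^[k] ((RhoMul γρ)^[j] g)}

/-- The monomial order: lexicographic with `ρ ≺ φ`, position-over-term with
`κ_{i₁} ≻ κ_{i₂}` for `i₁ < i₂`. -/
def MLt (a b : MonIx d) : Prop :=
  b.1 < a.1 ∨ (a.1 = b.1 ∧ (a.2.1 < b.2.1 ∨ (a.2.1 = b.2.1 ∧ a.2.2 < b.2.2)))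

/-- `m` is the leading monomial of `f`. -/
def IsLm (f : Fr K d) (m : MonIx d) : Prop :=
  m ∈ f.support ∧ ∀ m' ∈ f.support, m' ≠ m → MLt m' m

/-- The `μ`-cone of a monomial `m`; `μ = (φ ∈ μ, ρ ∈ μ)` as a pair of Booleans. -/
def Cone (μ : Bool × Bool) (m : MonIx d) : Set (MonIx d) :=
  {x | ∃ a b : ℕ, (μ.1 = true ∨ a = 0) ∧ (μ.2 = true ∨ b = 0) ∧
      x = (m.1, m.2.1 + a, m.2.2 + b)}

/-- A Janet basis `{(b_1,μ_1),…,(b_r,μ_r)}` for the submodule `N ⊆ 𝓕`: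
the `b_i` generate `N` as a left `D`-module and the set of leading monomials of
nonzero elements of `N` is the disjoint union of the cones `Mon(μ_i)·lm(b_i)`. -/
structure JanetBasis (γφ γρ : K →+* K) (d : ℕ) (N : Submodule K (Fr K d)) where
  r : ℕ
  b : Fin r → Fr K d
  μ : Fin r → Bool × Bool
  /-- the leading monomial of `b i` -/
  lmb : Fin r → MonIx d
  b_ne : ∀ i, b i ≠ 0
  b_lm : ∀ i, IsLm (b i) (lmb i)
  pair_inj : Function.Injective fun i => (b i, μ i)
  span_eq : DSpan γφ γρ (Set.range b) = N
  lm_cover : ∀ f ∈ N, f ≠ 0 → ∀ m, IsLm f m → ∃ i, m ∈ Cone (μ i) (lmb i)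
  cone_lm : ∀ i, ∀ m ∈ Cone (μ i) (lmb i), ∃ f ∈ N, f ≠ 0 ∧ IsLm f m
  disj : ∀ i i' m, m ∈ Cone (μ i) (lmb i) → m ∈ Cone (μ i') (lmb i') → i = i'

variable (γφ γρ : K →+* K)

/-- `f` is reduced (in normal form) w.r.t. the pairs of `J` indexed by `P`:
no monomial of `f` lies in one of the corresponding cones. -/
def IsReduced {N : Submodule K (Fr K d)} (J : JanetBasis γφ γρ d N)
    (P : Set (Fin J.r)) (f : Fr K d) : Prop :=
  ∀ m ∈ f.support, ∀ i ∈ P, m ∉ Cone (J.μ i) (J.lmb i)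

/-- `h` is the normal form `NF(g, ·)` of `g` with respect to the pairs of `J`
indexed by `P`: the reduction process subtracts left multiples of the `b i`
(`i ∈ P`), so `g - h` lies in the `D`-span of these, and the result is reduced. -/
def IsNFOf {N : Submodule K (Fr K d)} (J : JanetBasis γφ γρ d N)
    (P : Set (Fin J.r)) (g h : Fr K d) : Prop :=
  g - h ∈ DSpan γφ γρ (J.b '' P) ∧ IsReduced γφ γρ J P h

/-- The projection `pr : 𝓕 → M`, `φ^k ρ^j κ_i ↦ F^k S^j κ̄_i`, for a `D`-module `M`
with `φ`-action `F`, `ρ`-action `S` and distinguished elements `κb i = κ̄_i`. -/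
noncomputable def pr {M : Type} [AddCommGroup M] [Module K M]
    (F S : M →+ M) (κb : Fin d → M) (f : Fr K d) : M :=
  f.sum fun m x => x • F^[m.2.1] (S^[m.2.2] (κb m.1))

/-- The relation `p_i = ρ κ_i − Σ_j D_{ij} κ_j ∈ 𝓕`, where the entry `D_{ij} ∈ K⟨φ⟩`
is recorded as the finitely supported coefficient function of its powers of `φ`. -/
noncomputable def pelt (Dmat : Fin d → Fin d → (ℕ →₀ K)) (i : Fin d) : Fr K d :=
  Finsupp.single (i, 0, 1) (1 : K)
    - ∑ j : Fin d, (Dmat i j).sum fun k x => Finsupp.single (j, k, 0) x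

/-- `n_i = inf{n | ∃ (b,μ) ∈ J, lm(b) = φ^n κ_i} ∈ ℕ∪{∞}`. -/
noncomputable def nVal {N : Submodule K (Fr K d)} (J : JanetBasis γφ γρ d N)
    (i : Fin d) : ℕ∞ :=
  sInf {c : ℕ∞ | ∃ n : ℕ, c = n ∧ ∃ ix, J.lmb ix = (i, n, 0)}

/-- `m_i = inf{n | ∃ (b,μ) ∈ J, ∃ l ≥ 0, lm(b) = φ^n ρ^l κ_i} ∈ ℕ∪{∞}`. -/
noncomputable def mVal {N : Submodule K (Fr K d)} (J : JanetBasis γφ γρ d N)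
    (i : Fin d) : ℕ∞ :=
  sInf {c : ℕ∞ | ∃ n : ℕ, c = n ∧ ∃ ix l, J.lmb ix = (i, n, l)}

/-- `W_gen = {φ^j κ_i | 1 ≤ i ≤ d, 0 ≤ j < n_i} ⊆ 𝓕`. -/
def Wgen {N : Submodule K (Fr K d)} (J : JanetBasis γφ γρ d N) : Set (Fr K d) :=
  {w | ∃ (i : Fin d) (j : ℕ), (j : ℕ∞) < nVal γφ γρ J i ∧
      w = Finsupp.single (i, j, 0) (1 : K)}

/-- `W_ind = {φ^j κ_i | 1 ≤ i ≤ d, 0 ≤ j < m_i} ⊆ 𝓕`. -/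
def Wind {N : Submodule K (Fr K d)} (J : JanetBasis γφ γρ d N) : Set (Fr K d) :=
  {w | ∃ (i : Fin d) (j : ℕ), (j : ℕ∞) < mVal γφ γρ J i ∧
      w = Finsupp.single (i, j, 0) (1 : K)}

end JanetSetup

open JanetSetup

/-!
STATEMENT 9: In the situation below, `M` is finitely generated as a `K⟨ρ⟩`-module
(there are finitely many elements of `M` whose `S`-iterates span `M` over `K`)
if and only if `n_i < ∞` for all `i = 1, …, d`.
-/

namespace JanetProof
open JanetSetup Finsupp

variable {K : Type} [Field K] {d : ℕ}

/-- shift of monomial indices -/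
def sh (a b : ℕ) (m : MonIx d) : MonIx d := (m.1, m.2.1 + a, m.2.2 + b)

lemma sh_inj (a b : ℕ) : Function.Injective (sh (d := d) a b) := by
  rintro ⟨i, k, j⟩ ⟨i', k', j'⟩ h
  simp only [sh, Prod.ext_iff] at h ⊢
  exact ⟨h.1, by omega, by omega⟩

lemma sh_phi : (fun m : MonIx d => (m.1, m.2.1 + 1, m.2.2)) = sh 1 0 := by
  funext m; simp [sh]

lemma sh_rho : (fun m : MonIx d => (m.1, m.2.1, m.2.2 + 1)) = sh 0 1 := by
  funext m; simp [sh]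

lemma sh_sh (a b a' b' : ℕ) (m : MonIx d) : sh a b (sh a' b' m) = sh (a + a') (b + b') m := by
  simp only [sh, Prod.mk.injEq]
  exact ⟨trivial, by omega, by omega⟩

section Basic
variable (γφ γρ : K →+* K)

lemma PhiMul_single (m : MonIx d) (x : K) :
    PhiMul γφ (single m x) = single (sh 1 0 m) (γφ x) := by
  rw [PhiMul, mapRange_single, mapDomain_single]; simp [sh]

lemma RhoMul_single (m : MonIx d) (x : K) :
    RhoMul γρ (single m x) = single (sh 0 1 m) (γρ x) := by
  rw [RhoMul, mapRange_single, mapDomain_single]; simp [sh]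

lemma PhiMul_add (f g : Fr K d) : PhiMul γφ (f + g) = PhiMul γφ f + PhiMul γφ g := by
  rw [PhiMul, PhiMul, PhiMul, mapRange_add (map_add γφ), mapDomain_add]

lemma RhoMul_add (f g : Fr K d) : RhoMul γρ (f + g) = RhoMul γρ f + RhoMul γρ g := by
  rw [RhoMul, RhoMul, RhoMul, mapRange_add (map_add γρ), mapDomain_add]

lemma PhiMul_zero : PhiMul γφ (0 : Fr K d) = 0 := by
  rw [PhiMul, mapRange_zero, mapDomain_zero]

lemma RhoMul_zero : RhoMul γρ (0 : Fr K d) = 0 := by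
  rw [RhoMul, mapRange_zero, mapDomain_zero]

lemma mapRange_smul' (γ : K →+* K) (x : K) (f : Fr K d) :
    mapRange (fun y => γ y) (map_zero γ) (x • f)
      = γ x • mapRange (fun y => γ y) (map_zero γ) f := by
  ext a; simp [mapRange_apply, smul_eq_mul]

lemma PhiMul_smul (x : K) (f : Fr K d) : PhiMul γφ (x • f) = γφ x • PhiMul γφ f := by
  rw [PhiMul, mapRange_smul' γφ, mapDomain_smul, PhiMul]

lemma RhoMul_smul (x : K) (f : Fr K d) : RhoMul γρ (x • f) = γρ x • RhoMul γρ f := by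
  rw [RhoMul, mapRange_smul' γρ, mapDomain_smul, RhoMul]

lemma support_PhiMul (f : Fr K d) :
    (PhiMul γφ f).support = f.support.image (sh 1 0) := by
  classical
  rw [PhiMul, mapDomain_support_of_injective (by rw [sh_phi]; exact sh_inj 1 0),
    support_mapRange_of_injective (map_zero γφ) _ γφ.injective, sh_phi]

lemma support_RhoMul (f : Fr K d) :
    (RhoMul γρ f).support = f.support.image (sh 0 1) := by
  classical
  rw [RhoMul, mapDomain_support_of_injective (by rw [sh_rho]; exact sh_inj 0 1),
    support_mapRange_of_injective (map_zero γρ) _ γρ.injective, sh_rho]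

lemma PhiMul_apply (f : Fr K d) (m : MonIx d) :
    PhiMul γφ f (sh 1 0 m) = γφ (f m) := by
  rw [PhiMul, ← sh_phi] at *
  rw [mapDomain_apply (by rw [sh_phi]; exact sh_inj 1 0), mapRange_apply]

lemma RhoMul_apply (f : Fr K d) (m : MonIx d) :
    RhoMul γρ f (sh 0 1 m) = γρ (f m) := by
  rw [RhoMul, ← sh_rho] at *
  rw [mapDomain_apply (by rw [sh_rho]; exact sh_inj 0 1), mapRange_apply]

end Basic
lemma sh_eq (m : MonIx d) {a b a' b' : ℕ} (h1 : a = a') (h2 : b = b') :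
    sh a b m = sh a' b' m := by rw [h1, h2]

lemma sh_zero (m : MonIx d) : sh 0 0 m = m := by simp [sh]

section Shift
variable (γφ γρ : K →+* K)

/-- `Shift a b f = φ^a ρ^b f`. -/
noncomputable def Shift (a b : ℕ) (f : Fr K d) : Fr K d :=
  (PhiMul γφ)^[a] ((RhoMul γρ)^[b] f)

lemma PhiIter_single (a : ℕ) (m : MonIx d) (x : K) :
    (PhiMul γφ)^[a] (single m x) = single (sh a 0 m) ((⇑γφ)^[a] x) := by
  induction a with
  | zero => simp [sh_zero]
  | succ n ih =>
    have h : sh 1 0 (sh n 0 m) = sh (n + 1) 0 m := by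
      rw [sh_sh]; exact sh_eq m (by omega) (by omega)
    rw [Function.iterate_succ_apply', ih, PhiMul_single, h,
      ← Function.iterate_succ_apply' (⇑γφ)]

lemma RhoIter_single (b : ℕ) (m : MonIx d) (x : K) :
    (RhoMul γρ)^[b] (single m x) = single (sh 0 b m) ((⇑γρ)^[b] x) := by
  induction b with
  | zero => simp [sh_zero]
  | succ n ih =>
    have h : sh 0 1 (sh 0 n m) = sh 0 (n + 1) m := by
      rw [sh_sh]; exact sh_eq m (by omega) (by omega)
    rw [Function.iterate_succ_apply', ih, RhoMul_single, h,
      ← Function.iterate_succ_apply' (⇑γρ)]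

lemma Shift_single (a b : ℕ) (m : MonIx d) (x : K) :
    Shift γφ γρ a b (single m x) = single (sh a b m) ((⇑γφ)^[a] ((⇑γρ)^[b] x)) := by
  have h : sh a 0 (sh 0 b m) = sh a b m := by
    rw [sh_sh]; exact sh_eq m (by omega) (by omega)
  rw [Shift, RhoIter_single, PhiIter_single, h]

lemma support_PhiIter (a : ℕ) (f : Fr K d) :
    ((PhiMul γφ)^[a] f).support = f.support.image (sh a 0) := by
  classical
  induction a with
  | zero => simp only [Function.iterate_zero, id_eq]; ext m; simp [sh_zero]
  | succ n ih =>
    rw [Function.iterate_succ_apply', support_PhiMul, ih, Finset.image_image]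
    congr 1

lemma support_RhoIter (b : ℕ) (f : Fr K d) :
    ((RhoMul γρ)^[b] f).support = f.support.image (sh 0 b) := by
  classical
  induction b with
  | zero => simp only [Function.iterate_zero, id_eq]; ext m; simp [sh_zero]
  | succ n ih =>
    rw [Function.iterate_succ_apply', support_RhoMul, ih, Finset.image_image]
    congr 1

lemma support_Shift (a b : ℕ) (f : Fr K d) :
    (Shift γφ γρ a b f).support = f.support.image (sh a b) := by
  classical
  rw [Shift, support_PhiIter, support_RhoIter, Finset.image_image]
  congr 1

lemma PhiIter_apply (a : ℕ) (f : Fr K d) (m : MonIx d) :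
    (PhiMul γφ)^[a] f (sh a 0 m) = (⇑γφ)^[a] (f m) := by
  induction a with
  | zero => simp [sh_zero]
  | succ n ih =>
    have h : sh (n + 1) 0 m = sh 1 0 (sh n 0 m) := by
      rw [sh_sh]; exact sh_eq m (by omega) (by omega)
    rw [Function.iterate_succ_apply', h, PhiMul_apply, ih,
      ← Function.iterate_succ_apply' (⇑γφ)]

lemma RhoIter_apply (b : ℕ) (f : Fr K d) (m : MonIx d) :
    (RhoMul γρ)^[b] f (sh 0 b m) = (⇑γρ)^[b] (f m) := by
  induction b with
  | zero => simp [sh_zero]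
  | succ n ih =>
    have h : sh 0 (n + 1) m = sh 0 1 (sh 0 n m) := by
      rw [sh_sh]; exact sh_eq m (by omega) (by omega)
    rw [Function.iterate_succ_apply', h, RhoMul_apply, ih,
      ← Function.iterate_succ_apply' (⇑γρ)]

lemma Shift_apply (a b : ℕ) (f : Fr K d) (m : MonIx d) :
    Shift γφ γρ a b f (sh a b m) = (⇑γφ)^[a] ((⇑γρ)^[b] (f m)) := by
  have h : sh a b m = sh a 0 (sh 0 b m) := by
    rw [sh_sh]; exact sh_eq m (by omega) (by omega)
  rw [Shift, h, PhiIter_apply, RhoIter_apply]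

lemma PhiIter_add (a : ℕ) (f g : Fr K d) :
    (PhiMul γφ)^[a] (f + g) = (PhiMul γφ)^[a] f + (PhiMul γφ)^[a] g := by
  induction a with
  | zero => simp
  | succ n ih => simp only [Function.iterate_succ_apply', ih, PhiMul_add]

lemma RhoIter_add (b : ℕ) (f g : Fr K d) :
    (RhoMul γρ)^[b] (f + g) = (RhoMul γρ)^[b] f + (RhoMul γρ)^[b] g := by
  induction b with
  | zero => simp
  | succ n ih => simp only [Function.iterate_succ_apply', ih, RhoMul_add]

lemma Shift_add (a b : ℕ) (f g : Fr K d) :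
    Shift γφ γρ a b (f + g) = Shift γφ γρ a b f + Shift γφ γρ a b g := by
  simp only [Shift, RhoIter_add, PhiIter_add]

lemma PhiIter_smul (a : ℕ) (x : K) (f : Fr K d) :
    (PhiMul γφ)^[a] (x • f) = ((⇑γφ)^[a] x) • (PhiMul γφ)^[a] f := by
  induction a with
  | zero => simp
  | succ n ih =>
    simp only [Function.iterate_succ_apply', ih, PhiMul_smul,
      Function.iterate_succ_apply' (⇑γφ)]

lemma RhoIter_smul (b : ℕ) (x : K) (f : Fr K d) :
    (RhoMul γρ)^[b] (x • f) = ((⇑γρ)^[b] x) • (RhoMul γρ)^[b] f := by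
  induction b with
  | zero => simp
  | succ n ih =>
    simp only [Function.iterate_succ_apply', ih, RhoMul_smul,
      Function.iterate_succ_apply' (⇑γρ)]

lemma Shift_smul (a b : ℕ) (x : K) (f : Fr K d) :
    Shift γφ γρ a b (x • f) = ((⇑γφ)^[a] ((⇑γρ)^[b] x)) • Shift γφ γρ a b f := by
  simp only [Shift, RhoIter_smul, PhiIter_smul]

lemma Shift_zero (a b : ℕ) : Shift γφ γρ a b (0 : Fr K d) = 0 := by
  have := Shift_smul γφ γρ a b (0 : K) (0 : Fr K d)
  simpa using this

lemma Shift_sub (a b : ℕ) (f g : Fr K d) :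
    Shift γφ γρ a b (f - g) = Shift γφ γρ a b f - Shift γφ γρ a b g := by
  have hneg : Shift γφ γρ a b (-g) = - Shift γφ γρ a b g := by
    have := Shift_smul γφ γρ a b (-1 : K) g
    simpa using this
  rw [sub_eq_add_neg, Shift_add, hneg, sub_eq_add_neg]

lemma comm_single (hcomm : ∀ x : K, γφ (γρ x) = γρ (γφ x)) (b : ℕ) (x : K) :
    γφ ((⇑γρ)^[b] x) = (⇑γρ)^[b] (γφ x) := by
  induction b generalizing x with
  | zero => simp
  | succ n ih => rw [Function.iterate_succ_apply, Function.iterate_succ_apply, ih, hcomm]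

lemma comm_iterate (hcomm : ∀ x : K, γφ (γρ x) = γρ (γφ x)) (a b : ℕ) (x : K) :
    (⇑γφ)^[a] ((⇑γρ)^[b] x) = (⇑γρ)^[b] ((⇑γφ)^[a] x) := by
  induction a generalizing x with
  | zero => simp
  | succ n ih =>
    rw [Function.iterate_succ_apply, Function.iterate_succ_apply,
      comm_single γφ γρ hcomm, ih]

lemma Shift_Shift (hcomm : ∀ x : K, γφ (γρ x) = γρ (γφ x)) (a b a' b' : ℕ) (f : Fr K d) :
    Shift γφ γρ a b (Shift γφ γρ a' b' f) = Shift γφ γρ (a + a') (b + b') f := by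
  classical
  induction f using Finsupp.induction_linear with
  | zero => simp [Shift_zero]
  | add f g hf hg => simp only [Shift_add, hf, hg]
  | single m x =>
    rw [Shift_single, Shift_single, Shift_single, sh_sh]
    congr 1
    calc (⇑γφ)^[a] ((⇑γρ)^[b] ((⇑γφ)^[a'] ((⇑γρ)^[b'] x)))
        = (⇑γφ)^[a] ((⇑γφ)^[a'] ((⇑γρ)^[b] ((⇑γρ)^[b'] x))) := by
          rw [← comm_iterate γφ γρ hcomm a' b]
      _ = (⇑γφ)^[a + a'] ((⇑γρ)^[b + b'] x) := by
          rw [← Function.iterate_add_apply, ← Function.iterate_add_apply]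

end Shift

section Order

/-- Embedding of the monomial order into a lexicographic order on `ℕ³`. -/
def E (m : MonIx d) : ℕ ×ₗ (ℕ ×ₗ ℕ) := toLex (d - 1 - m.1.val, toLex (m.2.1, m.2.2))

lemma MLt_iff_E_lt {a b : MonIx d} : MLt a b ↔ E a < E b := by
  obtain ⟨⟨i, hi⟩, k, j⟩ := a
  obtain ⟨⟨i', hi'⟩, k', j'⟩ := b
  simp only [MLt, E, Prod.Lex.lt_iff, ofLex_toLex, Fin.lt_def, Fin.mk.injEq]
  constructor
  · rintro (h | ⟨h1, (h2 | ⟨h2, h3⟩)⟩)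
    · left; omega
    · right; exact ⟨by omega, Or.inl h2⟩
    · right; exact ⟨by omega, Or.inr ⟨h2, h3⟩⟩
  · rintro (h | ⟨h1, (h2 | ⟨h2, h3⟩)⟩)
    · left; omega
    · right; exact ⟨by omega, Or.inl h2⟩
    · right; exact ⟨by omega, Or.inr ⟨h2, h3⟩⟩

lemma E_inj : Function.Injective (E (d := d)) := by
  rintro ⟨⟨i, hi⟩, k, j⟩ ⟨⟨i', hi'⟩, k', j'⟩ h
  simp only [E] at h
  have h1 := toLex.injective h
  rw [Prod.mk.injEq] at h1
  have h2 := toLex.injective h1.2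
  rw [Prod.mk.injEq] at h2
  simp only [Prod.mk.injEq, Fin.mk.injEq]
  exact ⟨by omega, h2.1, h2.2⟩

lemma MLt_wf : WellFounded (MLt (d := d)) := by
  have h : WellFounded (InvImage (· < ·) (E (d := d))) :=
    InvImage.wf E wellFounded_lt
  exact Subrelation.wf (fun {a b} hab => MLt_iff_E_lt.mp hab) h

lemma MLt_of_ne_of_le {a b : MonIx d} (h : E a ≤ E b) (hne : a ≠ b) : MLt a b := by
  rw [MLt_iff_E_lt]
  exact lt_of_le_of_ne h (fun hE => hne (E_inj hE))

lemma MLt_sh {a b : ℕ} {m m' : MonIx d} (h : MLt m' m) : MLt (sh a b m') (sh a b m) := by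
  obtain ⟨i, k, j⟩ := m; obtain ⟨i', k', j'⟩ := m'
  simp only [MLt, sh] at h ⊢
  rcases h with h | ⟨h1, h2 | ⟨h2, h3⟩⟩
  · exact Or.inl h
  · exact Or.inr ⟨h1, Or.inl (by omega)⟩
  · exact Or.inr ⟨h1, Or.inr ⟨by omega, by omega⟩⟩

lemma exists_isLm {f : Fr K d} (hf : f ≠ 0) : ∃ m, IsLm f m := by
  classical
  have hne : f.support.Nonempty := Finsupp.support_nonempty_iff.mpr hf
  obtain ⟨m, hm, hmax⟩ := Finset.exists_max_image f.support E hne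
  exact ⟨m, hm, fun m' hm' hne' => MLt_of_ne_of_le (hmax m' hm') hne'⟩

lemma isLm_shift (γφ γρ : K →+* K) {f : Fr K d} {m : MonIx d} (a b : ℕ)
    (h : IsLm f m) : IsLm (Shift γφ γρ a b f) (sh a b m) := by
  classical
  obtain ⟨hm, hlt⟩ := h
  constructor
  · rw [support_Shift]
    exact Finset.mem_image_of_mem _ hm
  · intro m' hm' hne
    rw [support_Shift] at hm'
    obtain ⟨m'', hm'', rfl⟩ := Finset.mem_image.mp hm'
    have : m'' ≠ m := fun hc => hne (by rw [hc])
    exact MLt_sh (hlt m'' hm'' this)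

end Order

section Pr
variable {M : Type} [AddCommGroup M] [Module K M]
variable (F S : M →+ M) (κb : Fin d → M)

lemma pr_single (m : MonIx d) (x : K) :
    pr F S κb (single m x) = x • F^[m.2.1] (S^[m.2.2] (κb m.1)) := by
  rw [pr, Finsupp.sum_single_index]
  rw [zero_smul]

lemma pr_add (f g : Fr K d) :
    pr F S κb (f + g) = pr F S κb f + pr F S κb g := by
  rw [pr, pr, pr]
  exact Finsupp.sum_add_index' (fun m => zero_smul K _) (fun m x y => add_smul x y _)

lemma pr_smul (x : K) (f : Fr K d) :
    pr F S κb (x • f) = x • pr F S κb f := by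
  classical
  rw [pr, pr, Finsupp.sum_smul_index fun m => zero_smul K ((⇑F)^[m.2.1] ((⇑S)^[m.2.2] (κb m.1))),
    Finsupp.sum, Finsupp.sum, Finset.smul_sum]
  exact Finset.sum_congr rfl fun m hm => mul_smul x (f m) _

/-- `pr` as a `K`-linear map. -/
noncomputable def prL : Fr K d →ₗ[K] M where
  toFun := pr F S κb
  map_add' := pr_add F S κb
  map_smul' := pr_smul F S κb

lemma prL_apply (f : Fr K d) : prL F S κb f = pr F S κb f := rfl

variable (γφ γρ : K →+* K)

lemma pr_PhiMul (hF : ∀ (x : K) (m : M), F (x • m) = γφ x • F m) (f : Fr K d) :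
    pr F S κb (PhiMul γφ f) = F (pr F S κb f) := by
  classical
  induction f using Finsupp.induction_linear with
  | zero => rw [PhiMul_zero, ← prL_apply, map_zero, map_zero]
  | add f g hf hg => rw [PhiMul_add, pr_add, pr_add, map_add, hf, hg]
  | single m x =>
    rw [PhiMul_single, pr_single, pr_single, hF]
    show γφ x • F^[m.2.1 + 1] (S^[m.2.2] (κb m.1)) = γφ x • F (F^[m.2.1] (S^[m.2.2] (κb m.1)))
    rw [Function.iterate_succ_apply' (⇑F)]

lemma hFS_iter (hFS : ∀ m : M, F (S m) = S (F m)) (k : ℕ) (z : M) :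
    S (F^[k] z) = F^[k] (S z) := by
  induction k generalizing z with
  | zero => simp
  | succ n ih =>
    rw [Function.iterate_succ_apply' (⇑F), Function.iterate_succ_apply' (⇑F), ← hFS, ih]

lemma pr_RhoMul (hS : ∀ (x : K) (m : M), S (x • m) = γρ x • S m)
    (hFS : ∀ m : M, F (S m) = S (F m)) (f : Fr K d) :
    pr F S κb (RhoMul γρ f) = S (pr F S κb f) := by
  classical
  induction f using Finsupp.induction_linear with
  | zero => rw [RhoMul_zero, ← prL_apply, map_zero, map_zero]
  | add f g hf hg => rw [RhoMul_add, pr_add, pr_add, map_add, hf, hg]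
  | single m x =>
    rw [RhoMul_single, pr_single, pr_single, hS]
    show γρ x • F^[m.2.1] (S^[m.2.2 + 1] (κb m.1))
        = γρ x • S (F^[m.2.1] (S^[m.2.2] (κb m.1)))
    rw [hFS_iter F S hFS, Function.iterate_succ_apply' (⇑S)]

lemma pr_Shift (hF : ∀ (x : K) (m : M), F (x • m) = γφ x • F m)
    (hS : ∀ (x : K) (m : M), S (x • m) = γρ x • S m)
    (hFS : ∀ m : M, F (S m) = S (F m)) (a b : ℕ) (f : Fr K d) :
    pr F S κb (Shift γφ γρ a b f) = F^[a] (S^[b] (pr F S κb f)) := by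
  rw [Shift]
  induction a with
  | zero =>
    simp only [Function.iterate_zero, id_eq]
    induction b with
    | zero => simp
    | succ n ih =>
      rw [Function.iterate_succ_apply' (RhoMul γρ), Function.iterate_succ_apply' (⇑S),
        pr_RhoMul F S κb γρ hS hFS, ih]
  | succ n ih =>
    rw [Function.iterate_succ_apply' (PhiMul γφ), Function.iterate_succ_apply' (⇑F),
      pr_PhiMul F S κb γφ hF, ih]

lemma pr_eq_sum (f : Fr K d) :
    pr F S κb f = ∑ m ∈ f.support, f m • pr F S κb (single m (1 : K)) := by
  rw [pr, Finsupp.sum]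
  refine Finset.sum_congr rfl fun m hm => ?_
  rw [pr_single, one_smul]

end Pr

section Span
variable (γφ γρ : K →+* K) {s : Set (Fr K d)}

lemma mem_DSpan_shift_gen {g : Fr K d} (hg : g ∈ s) (a b : ℕ) :
    Shift γφ γρ a b g ∈ DSpan γφ γρ s :=
  Submodule.subset_span ⟨a, b, g, hg, rfl⟩

lemma mem_DSpan_self {g : Fr K d} (hg : g ∈ s) : g ∈ DSpan γφ γρ s :=
  Submodule.subset_span ⟨0, 0, g, hg, by simp⟩

lemma DSpan_shift_closed (hcomm : ∀ x : K, γφ (γρ x) = γρ (γφ x))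
    {f : Fr K d} (hf : f ∈ DSpan γφ γρ s) (a b : ℕ) :
    Shift γφ γρ a b f ∈ DSpan γφ γρ s := by
  induction hf using Submodule.span_induction with
  | mem x hx =>
    obtain ⟨k, j, g, hg, rfl⟩ := hx
    have : (PhiMul γφ)^[k] ((RhoMul γρ)^[j] g) = Shift γφ γρ k j g := rfl
    rw [this, Shift_Shift γφ γρ hcomm]
    exact mem_DSpan_shift_gen γφ γρ hg _ _
  | zero => rw [Shift_zero]; exact Submodule.zero_mem _
  | add x y hx hy ihx ihy => rw [Shift_add]; exact Submodule.add_mem _ ihx ihy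
  | smul c x hx ih => rw [Shift_smul]; exact Submodule.smul_mem _ _ ih

variable {M : Type} [AddCommGroup M] [Module K M]
variable (F S : M →+ M) (κb : Fin d → M) (Dmat : Fin d → Fin d → (ℕ →₀ K))

lemma pr_pelt (hact : ∀ i, S (κb i) = ∑ j : Fin d, (Dmat i j).sum fun k x => x • F^[k] (κb j))
    (i : Fin d) : pr F S κb (pelt Dmat i) = 0 := by
  rw [pelt, ← prL_apply, map_sub, map_sum]
  have h1 : prL F S κb (single ((i, 0, 1) : MonIx d) (1 : K)) = S (κb i) := by
    rw [prL_apply, pr_single, one_smul]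
    simp
  have h2 : ∀ j : Fin d,
      prL F S κb ((Dmat i j).sum fun k x => single ((j, k, 0) : MonIx d) x)
        = (Dmat i j).sum fun k x => x • F^[k] (κb j) := by
    intro j
    rw [map_finsuppSum]
    refine Finsupp.sum_congr fun k hk => ?_
    rw [prL_apply, pr_single]
    simp
  rw [h1, hact i, sub_eq_zero]
  exact Finset.sum_congr rfl fun j _ => (h2 j).symm

lemma pr_N_zero (hF : ∀ (x : K) (m : M), F (x • m) = γφ x • F m)
    (hS : ∀ (x : K) (m : M), S (x • m) = γρ x • S m)
    (hFS : ∀ m : M, F (S m) = S (F m))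
    (hact : ∀ i, S (κb i) = ∑ j : Fin d, (Dmat i j).sum fun k x => x • F^[k] (κb j))
    {f : Fr K d} (hf : f ∈ DSpan γφ γρ (Set.range (pelt Dmat))) :
    pr F S κb f = 0 := by
  induction hf using Submodule.span_induction with
  | mem x hx =>
    obtain ⟨k, j, g, ⟨i, rfl⟩, rfl⟩ := hx
    have : (PhiMul γφ)^[k] ((RhoMul γρ)^[j] (pelt Dmat i))
        = Shift γφ γρ k j (pelt Dmat i) := rfl
    rw [this, pr_Shift F S κb γφ γρ hF hS hFS, pr_pelt F S κb Dmat hact,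
      Function.iterate_fixed (map_zero S) j, Function.iterate_fixed (map_zero F) k]
  | zero => rw [← prL_apply, map_zero]
  | add x y hx hy ihx ihy => rw [pr_add, ihx, ihy, add_zero]
  | smul c x hx ih => rw [pr_smul, ih, smul_zero]

end Span

section Janet
variable (γφ γρ : K →+* K) {N : Submodule K (Fr K d)}

lemma iter_ne_zero (γ : K →+* K) (n : ℕ) {x : K} (hx : x ≠ 0) : (⇑γ)^[n] x ≠ 0 := by
  induction n generalizing x with
  | zero => simpa
  | succ k ih =>
    rw [Function.iterate_succ_apply]
    exact ih (fun h => hx (γ.injective (by rw [h, map_zero])))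

/-- The maximal `φ`-degree appearing in the Janet basis. -/
noncomputable def Kst (J : JanetBasis γφ γρ d N) : ℕ :=
  Finset.univ.sup fun s : Fin J.r => (J.b s).support.sup fun m => m.2.1

lemma le_Kst (J : JanetBasis γφ γρ d N) {s : Fin J.r} {m : MonIx d}
    (hm : m ∈ (J.b s).support) : m.2.1 ≤ Kst γφ γρ J := by
  have h1 : m.2.1 ≤ (J.b s).support.sup (fun m => m.2.1) := Finset.le_sup (f := fun m : MonIx d => m.2.1) hm
  have h2 : (J.b s).support.sup (fun m => m.2.1) ≤ Kst γφ γρ J :=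
    Finset.le_sup (f := fun s : Fin J.r => (J.b s).support.sup fun m => m.2.1)
      (Finset.mem_univ s)
  exact le_trans h1 h2

/-- The set of leading monomials of the submodule: all shifts of the `lmb`'s. -/
def Lset (J : JanetBasis γφ γρ d N) : Set (MonIx d) :=
  {m | ∃ (s : Fin J.r) (a b : ℕ), m = sh a b (J.lmb s)}

lemma cone_sub_Lset (J : JanetBasis γφ γρ d N) {s : Fin J.r} {m : MonIx d}
    (h : m ∈ Cone (J.μ s) (J.lmb s)) : m ∈ Lset γφ γρ J := by
  obtain ⟨a, b, _, _, rfl⟩ := h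
  exact ⟨s, a, b, rfl⟩

/-- `Bnd c m m'` : the `φ`-degree of `m'` exceeds that of `m` by at most
`c` times the index increase. -/
def Bnd (c : ℕ) (m m' : MonIx d) : Prop :=
  m'.2.1 + m.1.val * c ≤ m.2.1 + m'.1.val * c

lemma Bnd_refl (c : ℕ) (m : MonIx d) : Bnd c m m := le_refl _

lemma Bnd_trans {c : ℕ} {m m' m'' : MonIx d} (h1 : Bnd c m m') (h2 : Bnd c m' m'') :
    Bnd c m m'' := by
  rw [Bnd] at *; omega

lemma Bnd_of {c : ℕ} {m m' : MonIx d}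
    (h : m.1 < m'.1 ∨ (m'.1 = m.1 ∧ m'.2.1 ≤ m.2.1)) (hk : m'.2.1 ≤ m.2.1 + c) :
    Bnd c m m' := by
  rcases h with h | ⟨h1, h2⟩
  · have hle : (m.1.val + 1) * c ≤ m'.1.val * c :=
      Nat.mul_le_mul_right c (by exact h)
    rw [Bnd]
    calc m'.2.1 + m.1.val * c ≤ m.2.1 + c + m.1.val * c := by omega
      _ = m.2.1 + (m.1.val + 1) * c := by ring
      _ ≤ m.2.1 + m'.1.val * c := by omega
  · rw [Bnd, h1]
    omega

lemma Bnd_phi_le {c : ℕ} {m m' : MonIx d} (h : Bnd c m m') (hd : m'.1.val < d)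
    {Φ : ℕ} (hm : m.2.1 ≤ Φ) : m'.2.1 ≤ Φ + d * c := by
  rw [Bnd] at h
  have : m'.1.val * c ≤ d * c := Nat.mul_le_mul_right c (le_of_lt hd)
  omega

/-- Existence of a normalized reducer at any monomial of `Lset`. -/
lemma exists_reducer (J : JanetBasis γφ γρ d N)
    (hcomm : ∀ x : K, γφ (γρ x) = γρ (γφ x))
    {m : MonIx d} (hm : m ∈ Lset γφ γρ J) :
    ∃ t : Fr K d, t ∈ N ∧ t m = 1 ∧
      ∀ m' ∈ t.support, m' ≠ m → MLt m' m ∧ m'.2.1 ≤ m.2.1 + Kst γφ γρ J := by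
  classical
  obtain ⟨s, a, b, rfl⟩ := hm
  set g := J.b s with hg
  have hgN : g ∈ N := by
    rw [← J.span_eq]
    exact mem_DSpan_self γφ γρ (Set.mem_range_self s)
  have hlm : IsLm g (J.lmb s) := J.b_lm s
  have hlc : g (J.lmb s) ≠ 0 := Finsupp.mem_support_iff.mp hlm.1
  set r := Shift γφ γρ a b g with hr
  have hrv : r (sh a b (J.lmb s)) = (⇑γφ)^[a] ((⇑γρ)^[b] (g (J.lmb s))) :=
    Shift_apply γφ γρ a b g (J.lmb s)
  have hrv0 : r (sh a b (J.lmb s)) ≠ 0 := by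
    rw [hrv]
    exact iter_ne_zero γφ a (iter_ne_zero γρ b hlc)
  set c := (r (sh a b (J.lmb s)))⁻¹ with hc
  have hc0 : c ≠ 0 := inv_ne_zero hrv0
  refine ⟨c • r, ?_, ?_, ?_⟩
  · exact Submodule.smul_mem _ _ (by
      rw [hr, ← J.span_eq]
      exact DSpan_shift_closed γφ γρ hcomm
        (mem_DSpan_self γφ γρ (Set.mem_range_self s)) a b)
  · rw [Finsupp.smul_apply, smul_eq_mul, hc, inv_mul_cancel₀ hrv0]
  · intro m' hm' hne
    have hsupp : m' ∈ r.support := by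
      rwa [Finsupp.support_smul_eq hc0] at hm'
    rw [hr, support_Shift] at hsupp
    obtain ⟨m'', hm'', rfl⟩ := Finset.mem_image.mp hsupp
    have hne'' : m'' ≠ J.lmb s := fun h => hne (by rw [h])
    have hmlt : MLt m'' (J.lmb s) := hlm.2 m'' hm'' hne''
    refine ⟨MLt_sh hmlt, ?_⟩
    have h1 : m''.2.1 ≤ Kst γφ γρ J := le_Kst γφ γρ J hm''
    show (sh a b m'').2.1 ≤ (sh a b (J.lmb s)).2.1 + Kst γφ γρ J
    simp only [sh]
    omega

end Janet

section NF
variable (γφ γρ : K →+* K) {N : Submodule K (Fr K d)}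

lemma Bnd_of_MLt {c : ℕ} {m m' : MonIx d} (h : MLt m' m) (hk : m'.2.1 ≤ m.2.1 + c) :
    Bnd c m m' := by
  refine Bnd_of ?_ hk
  rcases h with h | ⟨h1, h2 | ⟨h2, h3⟩⟩
  · exact Or.inl h
  · exact Or.inr ⟨h1, le_of_lt h2⟩
  · exact Or.inr ⟨h1, le_of_eq h2⟩

set_option maxHeartbeats 1000000 in
/-- Per-monomial normal form with control on the `φ`-degrees. -/
lemma nf_mono (J : JanetBasis γφ γρ d N) (hcomm : ∀ x : K, γφ (γρ x) = γρ (γφ x))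
    (m : MonIx d) :
    ∃ u : Fr K d, single m (1 : K) - u ∈ N ∧
      (∀ m' ∈ u.support, m' ∉ Lset γφ γρ J) ∧
      (∀ m' ∈ u.support, Bnd (Kst γφ γρ J) m m') := by
  classical
  induction m using MLt_wf.induction with
  | _ m IH =>
  by_cases hm : m ∈ Lset γφ γρ J
  · obtain ⟨t, htN, htm, hts⟩ := exists_reducer γφ γρ J hcomm hm
    set tail := t - single m (1 : K) with htaildef
    have htail_m : tail m = 0 := by
      rw [htaildef, Finsupp.sub_apply, Finsupp.single_eq_same, htm, sub_self]
    have htail_mem : ∀ m' ∈ tail.support, m' ≠ m ∧ m' ∈ t.support := by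
      intro m' hm'
      have hne : m' ≠ m := by
        intro h; rw [h] at hm'; exact Finsupp.mem_support_iff.mp hm' htail_m
      refine ⟨hne, ?_⟩
      have : tail m' = t m' := by
        rw [htaildef, Finsupp.sub_apply, Finsupp.single_eq_of_ne' (Ne.symm hne), sub_zero]
      rw [Finsupp.mem_support_iff, this] at hm'
      exact Finsupp.mem_support_iff.mpr hm'
    have key : ∀ m' ∈ tail.support, ∃ u' : Fr K d, single m' (1 : K) - u' ∈ N ∧
        (∀ m'' ∈ u'.support, m'' ∉ Lset γφ γρ J) ∧
        (∀ m'' ∈ u'.support, Bnd (Kst γφ γρ J) m' m'') := by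
      intro m' hm'
      obtain ⟨hne, hmem⟩ := htail_mem m' hm'
      exact IH m' (hts m' hmem hne).1
    choose U hU1 hU2 hU3 using key
    refine ⟨-∑ p ∈ tail.support.attach, tail p.1 • U p.1 p.2, ?_, ?_, ?_⟩
    · have htt : ∑ p ∈ tail.support.attach, tail p.1 • single p.1 (1 : K) = tail := by
        rw [Finset.sum_attach tail.support (fun m' => tail m' • single m' (1 : K))]
        have : ∀ m' ∈ tail.support, tail m' • single m' (1 : K) = single m' (tail m') := by
          intro m' _
          rw [Finsupp.smul_single, smul_eq_mul, mul_one]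
        rw [Finset.sum_congr rfl this]
        exact Finsupp.sum_single tail
      have heq : single m (1 : K) - (-∑ p ∈ tail.support.attach, tail p.1 • U p.1 p.2)
          = t - ∑ p ∈ tail.support.attach, tail p.1 • (single p.1 (1 : K) - U p.1 p.2) := by
        simp only [smul_sub, Finset.sum_sub_distrib, htt]
        have h3 : t - tail = single m (1 : K) := by rw [htaildef, sub_sub_cancel]
        rw [sub_neg_eq_add, ← h3]
        abel
      rw [heq]
      refine Submodule.sub_mem N htN (Submodule.sum_mem N ?_)
      intro p _
      exact Submodule.smul_mem N _ (hU1 p.1 p.2)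
    · intro m'' hm''
      rw [Finsupp.support_neg] at hm''
      obtain ⟨p, _, hp⟩ := Finsupp.mem_support_finset_sum m'' hm''
      exact hU2 p.1 p.2 m'' (Finsupp.support_smul hp)
    · intro m'' hm''
      rw [Finsupp.support_neg] at hm''
      obtain ⟨p, _, hp⟩ := Finsupp.mem_support_finset_sum m'' hm''
      have h1 := hts p.1 (htail_mem p.1 p.2).2 (htail_mem p.1 p.2).1
      exact Bnd_trans (Bnd_of_MLt h1.1 h1.2) (hU3 p.1 p.2 m'' (Finsupp.support_smul hp))
  · refine ⟨single m (1 : K), by rw [sub_self]; exact Submodule.zero_mem N, ?_, ?_⟩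
    · intro m' hm'
      have := Finsupp.support_single_subset hm'
      rw [Finset.mem_singleton] at this
      rwa [this]
    · intro m' hm'
      have := Finsupp.support_single_subset hm'
      rw [Finset.mem_singleton] at this
      rw [this]
      exact Bnd_refl _ m

end NF

section NFElt
variable (γφ γρ : K →+* K) {N : Submodule K (Fr K d)}

lemma sum_single_smul (f : Fr K d) :
    ∑ m ∈ f.support, f m • single m (1 : K) = f := by
  have h : ∀ m ∈ f.support, f m • single m (1 : K) = single m (f m) := by
    intro m _
    rw [Finsupp.smul_single, smul_eq_mul, mul_one]
  rw [Finset.sum_congr rfl h]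
  exact Finsupp.sum_single f

set_option maxHeartbeats 1000000 in
/-- Normal form of an arbitrary element, with `φ`-degree control. -/
lemma nf_elt (J : JanetBasis γφ γρ d N) (hcomm : ∀ x : K, γφ (γρ x) = γρ (γφ x))
    (f : Fr K d) :
    ∃ u : Fr K d, f - u ∈ N ∧ (∀ m' ∈ u.support, m' ∉ Lset γφ γρ J) ∧
      ∀ m' ∈ u.support, ∃ m ∈ f.support, Bnd (Kst γφ γρ J) m m' := by
  classical
  choose U hU1 hU2 hU3 using fun m => nf_mono γφ γρ J hcomm m
  refine ⟨∑ m ∈ f.support, f m • U m, ?_, ?_, ?_⟩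
  · have heq : f - ∑ m ∈ f.support, f m • U m
        = ∑ m ∈ f.support, f m • (single m (1 : K) - U m) := by
      simp only [smul_sub, Finset.sum_sub_distrib, sum_single_smul]
    rw [heq]
    exact Submodule.sum_mem N fun m _ => Submodule.smul_mem N _ (hU1 m)
  · intro m' hm'
    obtain ⟨m, _, hp⟩ := Finsupp.mem_support_finset_sum m' hm'
    exact hU2 m m' (Finsupp.support_smul hp)
  · intro m' hm'
    obtain ⟨m, hmf, hp⟩ := Finsupp.mem_support_finset_sum m' hm'
    exact ⟨m, hmf, hU3 m m' (Finsupp.support_smul hp)⟩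

set_option maxHeartbeats 1000000 in
/-- Reduction of the `ρ`-degree to zero modulo the relations `pelt`. -/
lemma rho_mono (Dmat : Fin d → Fin d → (ℕ →₀ K)) (j : ℕ) :
    ∀ (i : Fin d) (k : ℕ), ∃ v : Fr K d,
      single ((i, k, j) : MonIx d) (1 : K) - v ∈ DSpan γφ γρ (Set.range (pelt Dmat)) ∧
      ∀ m' ∈ v.support, m'.2.2 = 0 := by
  classical
  induction j with
  | zero =>
    intro i k
    refine ⟨single ((i, k, 0) : MonIx d) (1 : K), by rw [sub_self]; exact Submodule.zero_mem _, ?_⟩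
    intro m' hm'
    have := Finsupp.support_single_subset hm'
    rw [Finset.mem_singleton] at this
    rw [this]
  | succ n ih =>
    intro i k
    set Q : Fr K d := ∑ j' : Fin d, (Dmat i j').sum fun k' x => single ((j', k', 0) : MonIx d) x
      with hQ
    have hpelt : pelt Dmat i = single ((i, 0, 1) : MonIx d) (1 : K) - Q := rfl
    set E := Shift γφ γρ k n Q with hE
    have hEsupp : ∀ m' ∈ E.support, m'.2.2 = n := by
      intro m' hm'
      rw [hE, support_Shift] at hm'
      obtain ⟨m'', hm'', rfl⟩ := Finset.mem_image.mp hm'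
      have hQ0 : m''.2.2 = 0 := by
        rw [hQ] at hm''
        obtain ⟨j', _, hj'⟩ := Finsupp.mem_support_finset_sum m'' hm''
        have := Finsupp.support_sum hj'
        obtain ⟨k', _, hk'⟩ := Finset.mem_biUnion.mp this
        have h2 := Finsupp.support_single_subset hk'
        rw [Finset.mem_singleton] at h2
        rw [h2]
      show (sh k n m'').2.2 = n
      simp [sh, hQ0]
    have hr : Shift γφ γρ k n (pelt Dmat i)
        = single ((i, k, n + 1) : MonIx d) (1 : K) - E := by
      rw [hpelt, Shift_sub, Shift_single]
      have h1 : sh k n ((i, 0, 1) : MonIx d) = ((i, k, n + 1) : MonIx d) := by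
        simp [sh, Nat.add_comm]
      have h2 : (⇑γφ)^[k] ((⇑γρ)^[n] (1 : K)) = 1 := by
        rw [Function.iterate_fixed (map_one γρ) n, Function.iterate_fixed (map_one γφ) k]
      rw [h1, h2, hE]
    have hrN : Shift γφ γρ k n (pelt Dmat i) ∈ DSpan γφ γρ (Set.range (pelt Dmat)) :=
      mem_DSpan_shift_gen γφ γρ (Set.mem_range_self i) k n
    have key : ∀ m' ∈ E.support, ∃ v' : Fr K d,
        single m' (1 : K) - v' ∈ DSpan γφ γρ (Set.range (pelt Dmat)) ∧
        ∀ m'' ∈ v'.support, m''.2.2 = 0 := by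
      intro m' hm'
      have h3 : m' = (m'.1, m'.2.1, n) := by
        rw [← hEsupp m' hm']
      rw [h3]
      exact ih m'.1 m'.2.1
    choose V hV1 hV2 using key
    refine ⟨∑ p ∈ E.support.attach, E p.1 • V p.1 p.2, ?_, ?_⟩
    · have htt : ∑ p ∈ E.support.attach, E p.1 • single p.1 (1 : K) = E := by
        rw [Finset.sum_attach E.support (fun m' => E m' • single m' (1 : K))]
        exact sum_single_smul E
      have heq : single ((i, k, n + 1) : MonIx d) (1 : K)
            - ∑ p ∈ E.support.attach, E p.1 • V p.1 p.2
          = Shift γφ γρ k n (pelt Dmat i)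
            + ∑ p ∈ E.support.attach, E p.1 • (single p.1 (1 : K) - V p.1 p.2) := by
        simp only [smul_sub, Finset.sum_sub_distrib, htt]
        rw [hr]
        abel
      rw [heq]
      exact Submodule.add_mem _ hrN (Submodule.sum_mem _ fun p _ =>
        Submodule.smul_mem _ _ (hV1 p.1 p.2))
    · intro m'' hm''
      obtain ⟨p, _, hp⟩ := Finsupp.mem_support_finset_sum m'' hm''
      exact hV2 p.1 p.2 m'' (Finsupp.support_smul hp)

set_option maxHeartbeats 1000000 in
/-- Reduction of the `ρ`-degree to zero for an arbitrary element. -/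
lemma rho_elt (Dmat : Fin d → Fin d → (ℕ →₀ K)) (f : Fr K d) :
    ∃ v : Fr K d, f - v ∈ DSpan γφ γρ (Set.range (pelt Dmat)) ∧
      ∀ m' ∈ v.support, m'.2.2 = 0 := by
  classical
  have key : ∀ m : MonIx d, ∃ v : Fr K d,
      single m (1 : K) - v ∈ DSpan γφ γρ (Set.range (pelt Dmat)) ∧
      ∀ m' ∈ v.support, m'.2.2 = 0 := by
    intro m
    have h3 : m = (m.1, m.2.1, m.2.2) := rfl
    rw [h3]
    exact rho_mono γφ γρ Dmat m.2.2 m.1 m.2.1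
  choose V hV1 hV2 using key
  refine ⟨∑ m ∈ f.support, f m • V m, ?_, ?_⟩
  · have heq : f - ∑ m ∈ f.support, f m • V m
        = ∑ m ∈ f.support, f m • (single m (1 : K) - V m) := by
      simp only [smul_sub, Finset.sum_sub_distrib, sum_single_smul]
    rw [heq]
    exact Submodule.sum_mem _ fun m _ => Submodule.smul_mem _ _ (hV1 m)
  · intro m' hm'
    obtain ⟨m, _, hp⟩ := Finsupp.mem_support_finset_sum m' hm'
    exact hV2 m m' (Finsupp.support_smul hp)

end NFElt

section PrInj
variable {M : Type} [AddCommGroup M] [Module K M]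
variable (F S : M →+ M) (κb : Fin d → M)

/-- `pr` is injective on elements of `ρ`-degree zero. -/
lemma pr_inj_rho0
    (hli : LinearIndependent K fun p : Fin d × ℕ => F^[p.2] (κb p.1))
    {W : Fr K d} (h0 : ∀ m ∈ W.support, m.2.2 = 0)
    (hpr : pr F S κb W = 0) : W = 0 := by
  classical
  set s : Finset (Fin d × ℕ) := W.support.image (fun m => (m.1, m.2.1)) with hs
  set g : Fin d × ℕ → K := fun p => W (p.1, p.2, 0) with hgdef
  have hinj : ∀ x ∈ W.support, ∀ y ∈ W.support,
      (fun m : MonIx d => (m.1, m.2.1)) x = (fun m : MonIx d => (m.1, m.2.1)) y → x = y := by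
    intro x hx y hy hxy
    have hx0 := h0 x hx
    have hy0 := h0 y hy
    simp only [Prod.mk.injEq] at hxy
    obtain ⟨x1, x2, x3⟩ := x
    obtain ⟨y1, y2, y3⟩ := y
    simp only at hxy hx0 hy0
    simp [hxy.1, hxy.2, hx0, hy0]
  have hsum : ∑ p ∈ s, g p • F^[p.2] (κb p.1) = 0 := by
    rw [hs, Finset.sum_image hinj, ← hpr, pr, Finsupp.sum]
    refine Finset.sum_congr rfl fun m hm => ?_
    have hm0 := h0 m hm
    have hme : ((m.1, m.2.1, 0) : MonIx d) = m := by
      obtain ⟨m1, m2, m3⟩ := m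
      simp only at hm0
      simp [hm0]
    simp [hgdef, hme, hm0]
  have hz := linearIndependent_iff'.mp hli s g hsum
  ext m
  by_cases hm : m ∈ W.support
  · have h1 : (m.1, m.2.1) ∈ s := Finset.mem_image_of_mem _ hm
    have h2 := hz _ h1
    rw [hgdef] at h2
    have hme : ((m.1, m.2.1, 0) : MonIx d) = m := by
      have hm0 := h0 m hm
      obtain ⟨m1, m2, m3⟩ := m
      simp only at hm0
      simp [hm0]
    simp only at h2
    rw [hme] at h2
    rw [h2]
    rfl
  · rw [Finsupp.notMem_support_iff.mp hm]
    rfl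

end PrInj

section Helpers
variable (γφ γρ : K →+* K) {N : Submodule K (Fr K d)}

lemma FS_iter_comm {M : Type} [AddCommGroup M] [Module K M] (F S : M →+ M)
    (hFS : ∀ m : M, F (S m) = S (F m)) (k j : ℕ) (z : M) :
    F^[k] (S^[j] z) = S^[j] (F^[k] z) := by
  induction j generalizing z with
  | zero => simp
  | succ n ih =>
    rw [Function.iterate_succ_apply, Function.iterate_succ_apply, ih, hFS_iter F S hFS]

lemma tail_support {t : Fr K d} {m : MonIx d} (htm : t m = 1) :
    ∀ m' ∈ (t - single m (1 : K)).support, m' ≠ m ∧ m' ∈ t.support := by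
  intro m' hm'
  have h0 : (t - single m (1 : K)) m = 0 := by
    rw [Finsupp.sub_apply, Finsupp.single_eq_same, htm, sub_self]
  have hne : m' ≠ m := by
    intro h; rw [h] at hm'; exact Finsupp.mem_support_iff.mp hm' h0
  refine ⟨hne, ?_⟩
  have : (t - single m (1 : K)) m' = t m' := by
    rw [Finsupp.sub_apply, Finsupp.single_eq_of_ne' (Ne.symm hne), sub_zero]
  rw [Finsupp.mem_support_iff, this] at hm'
  exact Finsupp.mem_support_iff.mpr hm'

lemma not_mem_Lset_of_top (J : JanetBasis γφ γρ d N) {i : Fin d}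
    (h : nVal γφ γρ J i = ⊤) (k : ℕ) : ((i, k, 0) : MonIx d) ∉ Lset γφ γρ J := by
  rintro ⟨s, a, b, hs⟩
  have hi : i = (J.lmb s).1 := congrArg Prod.fst hs
  have hj' : (0 : ℕ) = (J.lmb s).2.2 + b := congrArg (fun m : MonIx d => m.2.2) hs
  have hj : (J.lmb s).2.2 = 0 := by omega
  have h2 : J.lmb s = (i, (J.lmb s).2.1, 0) := by
    rw [hi]
    calc J.lmb s = ((J.lmb s).1, (J.lmb s).2.1, (J.lmb s).2.2) := rfl
      _ = ((J.lmb s).1, (J.lmb s).2.1, 0) := by rw [hj]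
  have h3 : ((J.lmb s).2.1 : ℕ∞) ∈
      {c : ℕ∞ | ∃ n : ℕ, c = n ∧ ∃ ix, J.lmb ix = (i, n, 0)} :=
    ⟨(J.lmb s).2.1, rfl, s, h2⟩
  have h4 : nVal γφ γρ J i ≤ ((J.lmb s).2.1 : ℕ∞) := sInf_le h3
  rw [h] at h4
  exact (WithTop.natCast_ne_top _) (top_le_iff.mp h4)

end Helpers

end JanetProof

/- THEOREM -/
open JanetProof
theorem fg_over_Krho_iff_nVal_lt_top
    {K : Type} [Field K] {d : ℕ} (γφ γρ : K →+* K)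
    (hcomm : ∀ x : K, γφ (γρ x) = γρ (γφ x))
    {M : Type} [AddCommGroup M] [Module K M]
    -- `M` is a left `D`-module: `F` and `S` are the commuting semilinear actions
    -- of `φ` and `ρ` on `M`
    (F S : M →+ M)
    (hF : ∀ (x : K) (m : M), F (x • m) = γφ x • F m)
    (hS : ∀ (x : K) (m : M), S (x • m) = γρ x • S m)
    (hFS : ∀ m : M, F (S m) = S (F m))
    -- `M` is free of rank `d` as `K⟨φ⟩`-module with basis `κ̄_1, …, κ̄_d`
    (κb : Fin d → M)
    (hli : LinearIndependent K fun p : Fin d × ℕ => F^[p.2] (κb p.1))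
    (hsp : Submodule.span K (Set.range fun p : Fin d × ℕ => F^[p.2] (κb p.1)) = ⊤)
    -- the `ρ`-action on the basis is given by the matrix `D ∈ Mat_{d×d}(K⟨φ⟩)`
    (Dmat : Fin d → Fin d → (ℕ →₀ K))
    (hact : ∀ i, S (κb i) = ∑ j : Fin d, (Dmat i j).sum fun k x => x • F^[k] (κb j))
    -- `J` is a Janet basis of `⟨p_1, …, p_d⟩`
    (J : JanetBasis γφ γρ d (DSpan γφ γρ (Set.range (pelt Dmat))))
    :
    (∃ (n : ℕ) (g : Fin n → M),
        Submodule.span K {m : M | ∃ (i : Fin n) (l : ℕ), m = S^[l] (g i)} = ⊤) ↔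
      (∀ i : Fin d, nVal γφ γρ J i < ⊤) := by
  classical
  constructor
  · -- fg over K⟨ρ⟩ ⟹ all n_i < ∞
    rintro ⟨n, g, hspan⟩
    by_contra hcon
    push_neg at hcon
    obtain ⟨i0, h0⟩ := hcon
    have htop : nVal γφ γρ J i0 = ⊤ := top_le_iff.mp h0
    have hrep : ∀ t : Fin n, ∃ c : (Fin d × ℕ) →₀ K,
        (c.sum fun p a => a • F^[p.2] (κb p.1)) = g t := by
      intro t
      have hmem : g t ∈ Submodule.span K (Set.range fun p : Fin d × ℕ => F^[p.2] (κb p.1)) := by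
        rw [hsp]; exact Submodule.mem_top
      exact Finsupp.mem_span_range_iff_exists_finsupp.mp hmem
    choose cc hcc using hrep
    have hιinj : Function.Injective (fun p : Fin d × ℕ => ((p.1, p.2, 0) : MonIx d)) := by
      rintro ⟨a, b⟩ ⟨a', b'⟩ hpq
      simp only [Prod.mk.injEq] at hpq
      rw [Prod.mk.injEq]
      exact ⟨hpq.1, hpq.2.1⟩
    set ι : (Fin d × ℕ) ↪ MonIx d := ⟨fun p => (p.1, p.2, 0), hιinj⟩ with hιdef
    set hh : Fin n → Fr K d := fun t => Finsupp.embDomain ι (cc t) with hhdef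
    have hprh : ∀ t, pr F S κb (hh t) = g t := by
      intro t
      rw [hhdef]
      show pr F S κb (Finsupp.embDomain ι (cc t)) = g t
      rw [pr, Finsupp.sum_embDomain, ← hcc t]
      refine Finsupp.sum_congr fun p hp => ?_
      show cc t p • F^[p.2] (S^[0] (κb p.1)) = cc t p • F^[p.2] (κb p.1)
      simp
    set Φ := Finset.univ.sup (fun t : Fin n => (hh t).support.sup fun m => m.2.1) with hΦdef
    set Kc := Kst γφ γρ J with hKcdef
    set k0 := Φ + d * Kc + 1 with hk0def
    have hvmem : F^[k0] (κb i0) ∈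
        Submodule.span K {m : M | ∃ (t : Fin n) (l : ℕ), m = S^[l] (g t)} := by
      rw [hspan]; exact Submodule.mem_top
    obtain ⟨cf, hcfs, hcf⟩ := Submodule.mem_span_set.mp hvmem
    have hexu : ∀ w ∈ cf.support, ∃ u : Fr K d,
        pr F S κb u = w ∧ (∀ m' ∈ u.support, m' ∉ Lset γφ γρ J) ∧
        (∀ m' ∈ u.support, m'.2.1 ≤ Φ + d * Kc) := by
      intro w hwmem
      obtain ⟨t, l, hwtl⟩ := hcfs hwmem
      set x := Shift γφ γρ 0 l (hh t) with hxdef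
      have hprx : pr F S κb x = w := by
        rw [hxdef, pr_Shift F S κb γφ γρ hF hS hFS, hprh, hwtl]
        simp
      have hxdeg : ∀ m ∈ x.support, m.2.1 ≤ Φ := by
        intro m hm
        rw [hxdef, support_Shift] at hm
        obtain ⟨m'', hm'', rfl⟩ := Finset.mem_image.mp hm
        have h1 : m''.2.1 ≤ (hh t).support.sup (fun m => m.2.1) :=
          Finset.le_sup (f := fun m : MonIx d => m.2.1) hm''
        have h2 : (hh t).support.sup (fun m => m.2.1) ≤ Φ :=
          Finset.le_sup (f := fun t : Fin n => (hh t).support.sup fun m => m.2.1)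
            (Finset.mem_univ t)
        show (sh 0 l m'').2.1 ≤ Φ
        simp only [sh]
        omega
      obtain ⟨u, hu1, hu2, hu3⟩ := nf_elt γφ γρ J hcomm x
      refine ⟨u, ?_, hu2, ?_⟩
      · have h5 : pr F S κb (x - u) = 0 :=
          pr_N_zero γφ γρ F S κb Dmat hF hS hFS hact hu1
        have h6 := map_sub (prL F S κb) x u
        rw [prL_apply, prL_apply, prL_apply, h5, hprx] at h6
        exact (sub_eq_zero.mp h6.symm).symm
      · intro m' hm'
        obtain ⟨m, hm, hB⟩ := hu3 m' hm'
        exact Bnd_phi_le hB m'.1.isLt (hxdeg m hm)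
    choose u hu1 hu2 hu3 using hexu
    set U := ∑ p ∈ cf.support.attach, cf p.1 • u p.1 p.2 with hUdef
    have hprU : pr F S κb U = F^[k0] (κb i0) := by
      rw [hUdef, ← prL_apply, map_sum]
      calc ∑ p ∈ cf.support.attach, prL F S κb (cf p.1 • u p.1 p.2)
          = ∑ p ∈ cf.support.attach, cf p.1 • p.1 := by
            refine Finset.sum_congr rfl fun p _ => ?_
            rw [map_smul, prL_apply, hu1 p.1 p.2]
        _ = ∑ w ∈ cf.support, cf w • w :=
            Finset.sum_attach cf.support (fun w => cf w • w)
        _ = F^[k0] (κb i0) := hcf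
    have hUsupp : ∀ m'' ∈ U.support, m'' ∉ Lset γφ γρ J ∧ m''.2.1 ≤ Φ + d * Kc := by
      intro m'' hm''
      rw [hUdef] at hm''
      obtain ⟨p, _, hp⟩ := Finsupp.mem_support_finset_sum m'' hm''
      have h4 := Finsupp.support_smul hp
      exact ⟨hu2 p.1 p.2 m'' h4, hu3 p.1 p.2 m'' h4⟩
    set W := Finsupp.single ((i0, k0, 0) : MonIx d) (1 : K) - U with hWdef
    have hprW : pr F S κb W = 0 := by
      rw [hWdef, ← prL_apply, map_sub, prL_apply, prL_apply, hprU, pr_single]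
      show (1 : K) • F^[k0] (S^[0] (κb i0)) - F^[k0] (κb i0) = 0
      simp
    have hWm : W ((i0, k0, 0) : MonIx d) = 1 := by
      have hU0 : U ((i0, k0, 0) : MonIx d) = 0 := by
        by_contra hne
        have hmem : ((i0, k0, 0) : MonIx d) ∈ U.support := Finsupp.mem_support_iff.mpr hne
        have h7 := (hUsupp _ hmem).2
        simp only at h7
        omega
      rw [hWdef, Finsupp.sub_apply, Finsupp.single_eq_same, hU0, sub_zero]
    have hWne : W ≠ 0 := by
      intro h
      rw [h] at hWm
      simp at hWm
    obtain ⟨v, hv1, hv2⟩ := rho_elt γφ γρ Dmat W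
    have hprWv : pr F S κb (W - v) = 0 :=
      pr_N_zero γφ γρ F S κb Dmat hF hS hFS hact hv1
    have hprv : pr F S κb v = 0 := by
      have h6 := map_sub (prL F S κb) W v
      rw [prL_apply, prL_apply, prL_apply, hprWv, hprW] at h6
      have h7 := h6.symm
      rw [zero_sub, neg_eq_zero] at h7
      exact h7
    have hv0 : v = 0 := pr_inj_rho0 F S κb hli hv2 hprv
    have hWN : W ∈ DSpan γφ γρ (Set.range (pelt Dmat)) := by
      have h8 := hv1
      rw [hv0, sub_zero] at h8
      exact h8
    obtain ⟨mstar, hlm⟩ := exists_isLm hWne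
    obtain ⟨sx, hcone⟩ := J.lm_cover W hWN hWne mstar hlm
    have hmL : mstar ∈ Lset γφ γρ J := cone_sub_Lset γφ γρ J hcone
    have hsupp : mstar ∈ (Finsupp.single ((i0, k0, 0) : MonIx d) (1 : K)).support ∪ U.support := by
      have := hlm.1
      rw [hWdef] at this
      exact Finsupp.support_sub this
    rcases Finset.mem_union.mp hsupp with hs1 | hs2
    · have h9 := Finsupp.support_single_subset hs1
      rw [Finset.mem_singleton] at h9
      rw [h9] at hmL
      exact not_mem_Lset_of_top γφ γρ J htop k0 hmL
    · exact (hUsupp mstar hs2).1 hmL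
  · -- all n_i < ∞ ⟹ fg over K⟨ρ⟩
    intro hn
    have hex : ∀ i : Fin d, ∃ nb : ℕ, ∃ ix : Fin J.r, J.lmb ix = (i, nb, 0) := by
      intro i
      have h1 : nVal γφ γρ J i < ⊤ := hn i
      rw [nVal] at h1
      obtain ⟨c, hc, -⟩ := sInf_lt_iff.mp h1
      obtain ⟨nb, rfl, ix, hix⟩ := hc
      exact ⟨nb, ix, hix⟩
    choose nb ix hix using hex
    set V : Submodule K M := Submodule.span K
      {x : M | ∃ (i : Fin d) (l k : ℕ), k < nb i ∧ x = S^[l] (F^[k] (κb i))} with hVdef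
    have hmain : ∀ m : MonIx d, pr F S κb (Finsupp.single m (1 : K)) ∈ V := by
      intro m
      induction m using MLt_wf.induction with
      | _ m IH =>
      by_cases hdeg : m.2.1 < nb m.1
      · have heq : pr F S κb (Finsupp.single m (1 : K)) = S^[m.2.2] (F^[m.2.1] (κb m.1)) := by
          rw [pr_single, one_smul, FS_iter_comm (K := K) F S hFS]
        rw [heq]
        exact Submodule.subset_span ⟨m.1, m.2.2, m.2.1, hdeg, rfl⟩
      · have hmL : m ∈ Lset γφ γρ J := by
          refine ⟨ix m.1, m.2.1 - nb m.1, m.2.2, ?_⟩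
          rw [hix m.1]
          show m = sh (m.2.1 - nb m.1) m.2.2 (m.1, nb m.1, 0)
          rw [sh]
          have : m = (m.1, m.2.1, m.2.2) := rfl
          rw [this]
          simp only [Prod.mk.injEq]
          exact ⟨trivial, by omega, by omega⟩
        obtain ⟨t, htN, htm, hts⟩ := exists_reducer γφ γρ J hcomm hmL
        have hprt : pr F S κb t = 0 :=
          pr_N_zero γφ γρ F S κb Dmat hF hS hFS hact htN
        have htail := tail_support htm
        have hsingle : Finsupp.single m (1 : K) = t - (t - Finsupp.single m (1 : K)) := by
          rw [sub_sub_cancel]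
        have hmemtail : pr F S κb (t - Finsupp.single m (1 : K)) ∈ V := by
          rw [pr_eq_sum]
          refine Submodule.sum_mem V fun m' hm' => Submodule.smul_mem V _ ?_
          obtain ⟨hne, hmem⟩ := htail m' hm'
          exact IH m' (hts m' hmem hne).1
        rw [hsingle, ← prL_apply, map_sub, prL_apply, prL_apply, hprt, zero_sub]
        exact Submodule.neg_mem V hmemtail
    set B := Finset.univ.sup nb with hBdef
    have hnbB : ∀ i, nb i ≤ B := fun i => Finset.le_sup (f := nb) (Finset.mem_univ i)
    refine ⟨d * (B + 1), fun q =>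
      F^[q.val % (B + 1)] (κb ⟨q.val / (B + 1),
        (Nat.div_lt_iff_lt_mul (Nat.succ_pos B)).mpr q.isLt⟩), ?_⟩
    have hVle : V ≤ Submodule.span K {m : M | ∃ (t : Fin (d * (B + 1))) (l : ℕ),
        m = S^[l] (F^[(t : ℕ) % (B + 1)] (κb ⟨(t : ℕ) / (B + 1),
          (Nat.div_lt_iff_lt_mul (Nat.succ_pos B)).mpr t.isLt⟩))} := by
      rw [hVdef]
      refine Submodule.span_le.mpr ?_
      rintro x ⟨i, l, k, hk, rfl⟩
      have hk1 : k < B + 1 := by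
        have := hnbB i
        omega
      have hlt : k + i.val * (B + 1) < d * (B + 1) := by
        calc k + i.val * (B + 1) < (B + 1) + i.val * (B + 1) :=
              Nat.add_lt_add_right hk1 _
          _ = (i.val + 1) * (B + 1) := by ring
          _ ≤ d * (B + 1) := Nat.mul_le_mul_right _ i.isLt
      have hmod : (k + i.val * (B + 1)) % (B + 1) = k := by
        rw [Nat.add_mul_mod_self_right, Nat.mod_eq_of_lt hk1]
      have hdiv : (k + i.val * (B + 1)) / (B + 1) = i.val := by
        rw [Nat.add_mul_div_right _ _ (Nat.succ_pos B), Nat.div_eq_of_lt hk1, Nat.zero_add]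
      refine Submodule.subset_span ⟨⟨k + i.val * (B + 1), hlt⟩, l, ?_⟩
      have hdd : (k + i.val * (B + 1)) / (B + 1) < d := by
        rw [hdiv]; exact i.isLt
      show (⇑S)^[l] ((⇑F)^[k] (κb i)) = (⇑S)^[l] ((⇑F)^[(k + i.val * (B + 1)) % (B + 1)]
        (κb ⟨(k + i.val * (B + 1)) / (B + 1), hdd⟩))
      have hfin : (⟨(k + i.val * (B + 1)) / (B + 1), hdd⟩ : Fin d) = i := Fin.ext hdiv
      rw [hmod, hfin]
    refine top_unique ?_
    calc (⊤ : Submodule K M)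
        = Submodule.span K (Set.range fun p : Fin d × ℕ => F^[p.2] (κb p.1)) := hsp.symm
      _ ≤ V := by
          refine Submodule.span_le.mpr ?_
          rintro x ⟨p, rfl⟩
          rw [SetLike.mem_coe]
          show (⇑F)^[p.2] (κb p.1) ∈ V
          have heq : (⇑F)^[p.2] (κb p.1)
              = pr F S κb (Finsupp.single ((p.1, p.2, 0) : MonIx d) (1 : K)) := by
            rw [pr_single]
            simp
          rw [heq]
          exact hmain (p.1, p.2, 0)
      _ ≤ _ := hVle
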